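/- Let G be a finite connected simple graph, r ∈ ℕ, and let D be a distance-r dominating set of G. Let 𝒫 be a set of paths in G such that for each pair u,v ∈ D with dist(u,v) ≤ 2r+1 there is a path P_{u,v} ∈ 𝒫 joining u and v. Then the subgraph of G induced by the vertex set D ∪ ⋃_{P∈𝒫} V(P) is connected. -/

import Mathlib

/-- `u` is weakly `s`-reachable from `v` w.r.t. the linear order on `V`:
there is a path of length at most `s` between `u` and `v` on which `u` is minimum. -/
def wreach {V : Type*} [LinearOrder V] (G : SimpleGraph V) (s : ℕ) (v : V) : Set V :=
  {u | ∃ p : G.Walk u v, p.IsPath ∧ p.length ≤ s ∧ ∀ x ∈ p.support, u ≤ x}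

/-- The closed `r`-neighborhood `N_r[v]`. -/
def ball {V : Type*} (G : SimpleGraph V) (r : ℕ) (v : V) : Set V :=
  {u | ∃ p : G.Walk v u, p.length ≤ r}

/-- `D` is a distance-`r` dominating set. -/
def isRDom {V : Type*} (G : SimpleGraph V) (r : ℕ) (D : Set V) : Prop :=
  ∀ w : V, ∃ v ∈ D, w ∈ ball G r v

lemma length_drop' {V : Type*} {G : SimpleGraph V} {u v : V} (p : G.Walk u v) (n : ℕ) :
    (p.drop n).length = p.length - n := by
  induction p generalizing n with
  | nil => cases n <;> simp [SimpleGraph.Walk.drop]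
  | cons h q ih =>
    cases n with
    | zero => simp [SimpleGraph.Walk.drop]
    | succ n => simp [SimpleGraph.Walk.drop, ih]

lemma exists_walk_getVert {V : Type*} {G : SimpleGraph V} {u v : V} (p : G.Walk u v) (n : ℕ) :
    ∃ q : G.Walk u (p.getVert n), q.length ≤ n := by
  induction p generalizing n with
  | nil => exact ⟨SimpleGraph.Walk.nil, by simp⟩
  | cons h q ih =>
    cases n with
    | zero => exact ⟨SimpleGraph.Walk.nil, by simp; rfl⟩
    | succ n =>
      obtain ⟨q', hq'⟩ := ih n
      exact ⟨q'.cons h, by simpa using hq'⟩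

lemma reach_induce {V : Type*} {G : SimpleGraph V} {S : Set V} {u v : V}
    (p : G.Walk u v) (hs : ∀ x ∈ p.support, x ∈ S) :
    (G.induce S).Reachable ⟨u, hs u p.start_mem_support⟩ ⟨v, hs v p.end_mem_support⟩ := by
  induction p with
  | nil => rfl
  | @cons a b c h q ih =>
    have hb : b ∈ S := hs b (by simp)
    have : (G.induce S).Adj ⟨a, hs a (q.cons h).start_mem_support⟩ ⟨b, hb⟩ := h
    exact (this.reachable).trans (ih fun x hx => hs x (by simp [hx]))

/-- let `G` be connected, `D` a distance-`r` dominating set, and for each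
pair `u,v ∈ D` with `dist(u,v) ≤ 2r+1` let `P u v` be a path joining `u` and `v`.
Then the subgraph induced by `D` together with the vertex sets of all these paths
is connected. -/
theorem stmt6 {V : Type*} [Fintype V] (G : SimpleGraph V) (hG : G.Connected) (r : ℕ)
    (D : Set V) (hD : isRDom G r D)
    (P : ∀ u v : V, G.Walk u v) (hP : ∀ u v : V, (P u v).IsPath) :
    (G.induce (D ∪
      ⋃ (u : V) (_ : u ∈ D) (v : V) (_ : v ∈ D) (_ : G.dist u v ≤ 2 * r + 1),
        {x : V | x ∈ (P u v).support})).Connected := by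
  classical
  set S : Set V := (D ∪
      ⋃ (u : V) (_ : u ∈ D) (v : V) (_ : v ∈ D) (_ : G.dist u v ≤ 2 * r + 1),
        {x : V | x ∈ (P u v).support}) with hS
  have hDS : D ⊆ S := Set.subset_union_left
  have hsupp : ∀ u ∈ D, ∀ v ∈ D, G.dist u v ≤ 2 * r + 1 →
      ∀ x ∈ (P u v).support, x ∈ S := by
    intro u hu v hv hd x hx
    refine Set.mem_union_right _ ?_
    simp only [Set.mem_iUnion]
    exact ⟨u, hu, v, hv, hd, hx⟩
  -- key claim: elements of D are reachable from each other in the induced graph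
  have key : ∀ n : ℕ, ∀ u, ∀ hu : u ∈ D, ∀ v, ∀ hv : v ∈ D, ∀ p : G.Walk u v,
      p.length ≤ n → (G.induce S).Reachable ⟨u, hDS hu⟩ ⟨v, hDS hv⟩ := by
    intro n
    induction n with
    | zero =>
      intro u hu v hv p hp
      have hd : G.dist u v ≤ 2 * r + 1 :=
        le_trans (le_trans (SimpleGraph.dist_le p) hp) (by omega)
      exact reach_induce (P u v) (hsupp u hu v hv hd)
    | succ n ih =>
      intro u hu v hv p hp
      by_cases hshort : p.length ≤ 2 * r + 1
      · have hd : G.dist u v ≤ 2 * r + 1 := le_trans (SimpleGraph.dist_le p) hshort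
        exact reach_induce (P u v) (hsupp u hu v hv hd)
      · push_neg at hshort
        set w := p.getVert (r + 1) with hw
        obtain ⟨d', hd', q0, hq0⟩ := hD w
        have hduw : G.dist u w ≤ r + 1 := by
          obtain ⟨q, hq⟩ := exists_walk_getVert p (r + 1)
          exact le_trans (SimpleGraph.dist_le q) hq
        have hdwd : G.dist w d' ≤ r := le_trans (SimpleGraph.dist_le q0.reverse) (by simpa)
        have hdud : G.dist u d' ≤ 2 * r + 1 := by
          have := hG.dist_triangle (u := u) (v := w) (w := d')
          omega
        have h1 : (G.induce S).Reachable ⟨u, hDS hu⟩ ⟨d', hDS hd'⟩ :=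
          reach_induce (P u d') (hsupp u hu d' hd' hdud)
        have h2 : (G.induce S).Reachable ⟨d', hDS hd'⟩ ⟨v, hDS hv⟩ := by
          refine ih d' hd' v hv (q0.append (p.drop (r + 1))) ?_
          rw [SimpleGraph.Walk.length_append, length_drop']
          omega
        exact h1.trans h2
  -- every element of S reaches an element of D
  have anchor : ∀ x, ∀ hx : x ∈ S, ∃ d, ∃ hd : d ∈ D,
      (G.induce S).Reachable ⟨x, hx⟩ ⟨d, hDS hd⟩ := by
    intro x hx
    rcases hx with hx' | hx'
    · exact ⟨x, hx', SimpleGraph.Reachable.refl _⟩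
    · simp only [Set.mem_iUnion] at hx'
      obtain ⟨u, hu, v, hv, hd, hmem⟩ := hx'
      have hmem : x ∈ (P u v).support := hmem
      have hsub : ∀ y ∈ ((P u v).takeUntil x hmem).support, y ∈ S := fun y hy =>
        hsupp u hu v hv hd y (SimpleGraph.Walk.support_takeUntil_subset _ hmem hy)
      exact ⟨u, hu, (reach_induce ((P u v).takeUntil x hmem) hsub).symm⟩
  rw [SimpleGraph.connected_iff]
  constructor
  · rintro ⟨x, hx⟩ ⟨y, hy⟩
    obtain ⟨dx, hdx, hrx⟩ := anchor x hx
    obtain ⟨dy, hdy, hry⟩ := anchor y hy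
    obtain ⟨p⟩ := hG.preconnected dx dy
    exact hrx.trans ((key p.length dx hdx dy hdy p le_rfl).trans hry.symm)
  · obtain ⟨w0⟩ := hG.nonempty
    obtain ⟨d, hd, _⟩ := hD w0
    exact ⟨⟨d, hDS hd⟩⟩
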